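/- Spectral decomposition integral: let ν be a Radon measure on ℝ₊^d \ {0} homogeneous of order -α (ν(uB) = u^{-α}ν(B)) with ν({x : ‖x‖ > 1}) < ∞, and let Γ̄ be its spectral measure, defined by Γ̄(S) = ν({x : ‖x‖ > 1, x/‖x‖ ∈ S}). Then for any measurable positively 1-homogeneous h: ℝ₊^d → ℝ₊ bounded on the unit sphere, ν({x : h(x) > 1}) = ∫_{𝕊₊} h(s)^α dΓ̄(s) · (1/α) · α = ∫_{𝕊₊} h(s)^α dΓ̄(s). -/

import Mathlib

open MeasureTheory Set

private lemma measurable_rsum (d : ℕ) : Measurable (fun x : Fin d → ℝ => ∑ j, x j) :=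
  Finset.measurable_sum _ (fun j _ => measurable_pi_apply j)

private lemma measurable_norml (d : ℕ) :
    Measurable (fun x : Fin d → ℝ => (∑ j, x j)⁻¹ • x) :=
  measurable_pi_lambda _ fun i => by
    simpa [Pi.smul_apply, smul_eq_mul] using
      (show Measurable fun x : Fin d → ℝ => (∑ j, x j)⁻¹ * x i from
        (measurable_rsum d).inv.mul (measurable_pi_apply i))

private lemma sigma_smul (d : ℕ) (c : ℝ) (hc : c ≠ 0) (x : Fin d → ℝ) :
    (∑ j, (c • x) j)⁻¹ • (c • x) = (∑ j, x j)⁻¹ • x := by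
  have hsum : ∑ j, (c • x) j = c * ∑ j, x j := by
    simp [Finset.mul_sum]
  rw [hsum, smul_smul, mul_inv, mul_comm c⁻¹, mul_assoc, inv_mul_cancel₀ hc, mul_one]

private lemma scale_image (d : ℕ) (c : ℝ) (hc : 0 < c) (S : Set (Fin d → ℝ)) :
    (c • ·) '' {x : Fin d → ℝ | 1 < ∑ j, x j ∧ (∑ j, x j)⁻¹ • x ∈ S}
      = {x : Fin d → ℝ | c < ∑ j, x j ∧ (∑ j, x j)⁻¹ • x ∈ S} := by
  ext y
  constructor
  · rintro ⟨x, ⟨hx1, hx2⟩, rfl⟩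
    have hsum : ∑ j, (c • x) j = c * ∑ j, x j := by simp [Finset.mul_sum]
    refine ⟨by rw [hsum]; nlinarith, ?_⟩
    rw [sigma_smul d c hc.ne' x]; exact hx2
  · rintro ⟨h1, h2⟩
    refine ⟨c⁻¹ • y, ⟨?_, ?_⟩, ?_⟩
    · have hsum : ∑ j, (c⁻¹ • y) j = c⁻¹ * ∑ j, y j := by simp [Finset.mul_sum]
      rw [hsum, show (1:ℝ) = c⁻¹ * c from (inv_mul_cancel₀ hc.ne').symm]
      exact mul_lt_mul_of_pos_left h1 (inv_pos.mpr hc)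
    · rw [sigma_smul d c⁻¹ (inv_ne_zero hc.ne') y]; exact h2
    · simp [smul_smul, mul_inv_cancel₀ hc.ne']

private lemma block_lemma (d : ℕ) (α : ℝ)
    (ν Γ : Measure (Fin d → ℝ))
    (hν_hom : ∀ u : ℝ, 0 < u → ∀ B : Set (Fin d → ℝ), MeasurableSet B →
      ν ((u • ·) '' B) = ENNReal.ofReal (u ^ (-α)) * ν B)
    (hΓ : ∀ S : Set (Fin d → ℝ), MeasurableSet S →
      Γ S = ν {x | 1 < (∑ j, x j) ∧ (∑ j, x j)⁻¹ • x ∈ S})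
    (c : ℝ) (hc : 0 < c) (S : Set (Fin d → ℝ)) (hS : MeasurableSet S) :
    ν {x : Fin d → ℝ | c < ∑ j, x j ∧ (∑ j, x j)⁻¹ • x ∈ S}
      = ENNReal.ofReal (c ^ (-α)) * Γ S := by
  have hB : MeasurableSet {x : Fin d → ℝ | 1 < ∑ j, x j ∧ (∑ j, x j)⁻¹ • x ∈ S} :=
    (measurableSet_lt measurable_const (measurable_rsum d)).inter ((measurable_norml d) hS)
  rw [← scale_image d c hc S, hν_hom c hc _ hB, hΓ S hS]

private lemma simple_case (d : ℕ) (α : ℝ) (hα : 0 < α)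
    (ν Γ : Measure (Fin d → ℝ))
    (hν_hom : ∀ u : ℝ, 0 < u → ∀ B : Set (Fin d → ℝ), MeasurableSet B →
      ν ((u • ·) '' B) = ENNReal.ofReal (u ^ (-α)) * ν B)
    (hΓ : ∀ S : Set (Fin d → ℝ), MeasurableSet S →
      Γ S = ν {x | 1 < (∑ j, x j) ∧ (∑ j, x j)⁻¹ • x ∈ S})
    (φ : SimpleFunc (Fin d → ℝ) ENNReal)
    (hφhom : ∀ c : ℝ, 0 < c → ∀ x, φ (c • x) = φ x)
    (hφfin : ∀ x, φ x ≠ ⊤) :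
    ν {x : Fin d → ℝ | 1 < ENNReal.ofReal (∑ j, x j) * φ x}
      = ∫⁻ s, (φ s) ^ α ∂Γ := by
  have hset : {x : Fin d → ℝ | 1 < ENNReal.ofReal (∑ j, x j) * φ x}
      = ⋃ c ∈ φ.range, ((⇑φ ⁻¹' {c}) ∩ {x | 1 < ENNReal.ofReal (∑ j, x j) * c}) := by
    ext x
    simp only [mem_iUnion, mem_inter_iff, mem_preimage, mem_singleton_iff, mem_setOf_eq,
      SimpleFunc.mem_range, Set.mem_range, exists_prop]
    constructor
    · intro hx; exact ⟨φ x, ⟨x, rfl⟩, rfl, hx⟩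
    · rintro ⟨c, _, rfl, hx⟩; exact hx
  have hmeasC : ∀ c : ENNReal,
      MeasurableSet {x : Fin d → ℝ | 1 < ENNReal.ofReal (∑ j, x j) * c} :=
    fun c => measurableSet_lt measurable_const
      ((ENNReal.measurable_ofReal.comp (measurable_rsum d)).mul measurable_const)
  have hdisj : (↑φ.range : Set ENNReal).PairwiseDisjoint
      (fun c => (⇑φ ⁻¹' {c}) ∩ {x : Fin d → ℝ | 1 < ENNReal.ofReal (∑ j, x j) * c}) := by
    intro c _ c' _ hne
    apply Disjoint.mono inter_subset_left inter_subset_left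
    rw [Set.disjoint_left]
    intro x hx hx'
    rw [mem_preimage, mem_singleton_iff] at hx hx'
    exact hne (hx ▸ hx' ▸ rfl)
  have hterm : ∀ c ∈ φ.range,
      ν ((⇑φ ⁻¹' {c}) ∩ {x : Fin d → ℝ | 1 < ENNReal.ofReal (∑ j, x j) * c})
        = c ^ α * Γ (⇑φ ⁻¹' {c}) := by
    intro c hc
    rcases eq_or_ne c 0 with rfl | hc0
    · simp [ENNReal.zero_rpow_of_pos hα]
    · have hcfin : c ≠ ⊤ := by
        rcases SimpleFunc.mem_range.mp hc with ⟨x, rfl⟩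
        exact hφfin x
      have ht : 0 < c.toReal := ENNReal.toReal_pos hc0 hcfin
      have hiff : ∀ x : Fin d → ℝ,
          (1 < ENNReal.ofReal (∑ j, x j) * c ↔ (c.toReal)⁻¹ < ∑ j, x j) := by
        intro x
        rcases le_or_gt (∑ j, x j) 0 with hle | hpos
        · constructor
          · intro hcon
            exfalso
            rw [ENNReal.ofReal_of_nonpos hle, zero_mul] at hcon
            exact (not_lt.mpr (zero_le : (0:ENNReal) ≤ 1)) hcon
          · intro hcon; exfalso; exact absurd (lt_of_lt_of_le hcon hle) (not_lt.mpr (inv_pos.mpr ht).le)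
        · conv_lhs => rw [← ENNReal.ofReal_toReal hcfin, ← ENNReal.ofReal_mul hpos.le,
            ENNReal.one_lt_ofReal]
          have h1 : (c.toReal)⁻¹ * c.toReal = 1 := inv_mul_cancel₀ ht.ne'
          constructor
          · intro hgt; nlinarith
          · intro hgt; nlinarith
      have hseteq : (⇑φ ⁻¹' {c}) ∩ {x : Fin d → ℝ | 1 < ENNReal.ofReal (∑ j, x j) * c}
          = {x : Fin d → ℝ | (c.toReal)⁻¹ < ∑ j, x j ∧ (∑ j, x j)⁻¹ • x ∈ ⇑φ ⁻¹' {c}} := by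
        ext x
        simp only [mem_inter_iff, mem_preimage, mem_singleton_iff, mem_setOf_eq, hiff x]
        constructor
        · rintro ⟨hfib, hgt⟩
          refine ⟨hgt, ?_⟩
          have hrx : 0 < ∑ j, x j := lt_trans (inv_pos.mpr ht) hgt
          have := hφhom (∑ j, x j) hrx ((∑ j, x j)⁻¹ • x)
          rw [smul_smul, mul_inv_cancel₀ hrx.ne', one_smul] at this
          rw [← this]; exact hfib
        · rintro ⟨hgt, hfib⟩
          refine ⟨?_, hgt⟩
          have hrx : 0 < ∑ j, x j := lt_trans (inv_pos.mpr ht) hgt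
          have := hφhom (∑ j, x j) hrx ((∑ j, x j)⁻¹ • x)
          rw [smul_smul, mul_inv_cancel₀ hrx.ne', one_smul] at this
          rw [this]; exact hfib
      rw [hseteq, block_lemma d α ν Γ hν_hom hΓ (c.toReal)⁻¹ (inv_pos.mpr ht) _
        (φ.measurableSet_fiber c)]
      congr 1
      rw [Real.inv_rpow ht.le, Real.rpow_neg ht.le, inv_inv,
        ← ENNReal.ofReal_rpow_of_pos ht, ENNReal.ofReal_toReal hcfin]
  calc ν {x : Fin d → ℝ | 1 < ENNReal.ofReal (∑ j, x j) * φ x}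
      = ∑ c ∈ φ.range, ν ((⇑φ ⁻¹' {c}) ∩ {x | 1 < ENNReal.ofReal (∑ j, x j) * c}) := by
        rw [hset]
        exact measure_biUnion_finset hdisj
          (fun c _ => (φ.measurableSet_fiber c).inter (hmeasC c))
    _ = ∑ c ∈ φ.range, c ^ α * Γ (⇑φ ⁻¹' {c}) := Finset.sum_congr rfl hterm
    _ = ∫⁻ s, (φ s) ^ α ∂Γ := by
        rw [← SimpleFunc.map_lintegral (· ^ α) φ, ← SimpleFunc.lintegral_eq_lintegral]
        simp [SimpleFunc.coe_map, Function.comp]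

/-- Spectral decomposition integral: let `ν` be a measure on `ℝ₊^d \ {0}`,
homogeneous of order `-α`, finite on `{‖x‖₁ > 1}` (sum norm on nonnegative
vectors), concentrated on the nonnegative orthant, and let `Γ̄` be its spectral
measure, `Γ̄(S) = ν({x : ‖x‖₁ > 1, x/‖x‖₁ ∈ S})`. Then for any measurable,
nonnegative, positively 1-homogeneous `h` bounded on the positive unit sphere,
`ν({h > 1}) = ∫_{𝕊₊} h(s)^α dΓ̄(s)`. -/
theorem spectral_decomposition_integral
    (d : ℕ) (α : ℝ) (hα : 0 < α)
    (ν : Measure (Fin d → ℝ))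
    (hν_orthant : ν {x | ¬ ∀ j, 0 ≤ x j} = 0)
    (hν_hom : ∀ u : ℝ, 0 < u → ∀ B : Set (Fin d → ℝ), MeasurableSet B →
      ν ((u • ·) '' B) = ENNReal.ofReal (u ^ (-α)) * ν B)
    (hν_fin : ν {x | 1 < ∑ j, x j} < ⊤)
    (Γ : Measure (Fin d → ℝ)) [IsFiniteMeasure Γ]
    (hΓ : ∀ S : Set (Fin d → ℝ), MeasurableSet S →
      Γ S = ν {x | 1 < (∑ j, x j) ∧ (∑ j, x j)⁻¹ • x ∈ S})
    (h : (Fin d → ℝ) → ℝ) (hmeas : Measurable h) (hnn : ∀ x, 0 ≤ h x)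
    (hhom : ∀ l : ℝ, 0 < l → ∀ x, h (l • x) = l * h x)
    (hbdd : ∃ M : ℝ, ∀ s : Fin d → ℝ, (∀ j, 0 ≤ s j) → (∑ j, s j) = 1 →
      h s ≤ M) :
    (ν {x | 1 < h x}).toReal = ∫ s, h s ^ α ∂Γ := by
  classical
  -- measure equality modulo the null complement of the orthant
  have hO : ∀ A B : Set (Fin d → ℝ),
      (∀ x, (∀ j, 0 ≤ x j) → (x ∈ A ↔ x ∈ B)) → ν A = ν B := by
    intro A B hAB
    have key : ∀ A B : Set (Fin d → ℝ),
        (∀ x, (∀ j, 0 ≤ x j) → (x ∈ A → x ∈ B)) → ν A ≤ ν B := by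
      intro A B hAB
      calc ν A ≤ ν (B ∪ {x | ¬ ∀ j, 0 ≤ x j}) := measure_mono (fun x hx => by
            by_cases hx0 : ∀ j, 0 ≤ x j
            · exact Or.inl (hAB x hx0 hx)
            · exact Or.inr hx0)
        _ ≤ ν B + ν {x | ¬ ∀ j, 0 ≤ x j} := measure_union_le _ _
        _ = ν B := by rw [hν_orthant, add_zero]
    exact le_antisymm (key A B fun x hx => (hAB x hx).mp)
      (key B A fun x hx => (hAB x hx).mpr)
  have h0 : h 0 = 0 := by
    have h2 := hhom 2 two_pos 0
    rw [smul_zero] at h2; linarith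
  set F : (Fin d → ℝ) → ENNReal :=
    fun x => ENNReal.ofReal (h ((∑ j, x j)⁻¹ • x)) with hF
  have mF : Measurable F :=
    ENNReal.measurable_ofReal.comp (hmeas.comp (measurable_norml d))
  have hFhom : ∀ c : ℝ, 0 < c → ∀ x, F (c • x) = F x := by
    intro c hc x
    simp only [hF]
    rw [sigma_smul d c hc.ne' x]
  -- Step A
  have stepA : ν {x | 1 < h x}
      = ν {x | 1 < ENNReal.ofReal (∑ j, x j) * F x} := by
    apply hO
    intro x hx
    have hrx : 0 ≤ ∑ j, x j := Finset.sum_nonneg fun j _ => hx j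
    rcases hrx.eq_or_lt with heq | hlt
    · have hx0 : x = 0 := funext fun j =>
        (Finset.sum_eq_zero_iff_of_nonneg (fun j _ => hx j)).mp heq.symm j
          (Finset.mem_univ j)
      subst hx0
      simp [hF, h0]
    · have hxeq : h x = (∑ j, x j) * h ((∑ j, x j)⁻¹ • x) := by
        have h2 := hhom (∑ j, x j) hlt ((∑ j, x j)⁻¹ • x)
        rwa [smul_smul, mul_inv_cancel₀ hlt.ne', one_smul] at h2
      simp only [mem_setOf_eq, hF]
      rw [hxeq, ← ENNReal.ofReal_mul hlt.le, ENNReal.one_lt_ofReal]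
  -- Γ is concentrated on the simplex
  have hae : ∀ᵐ s ∂Γ, (∑ j, s j) = 1 := by
    rw [ae_iff]
    have hm : MeasurableSet {s : Fin d → ℝ | ∑ j, s j = 1} :=
      (measurable_rsum d) (measurableSet_singleton 1)
    rw [hΓ {s | ¬ (∑ j, s j) = 1} hm.compl]
    have hempty : {x : Fin d → ℝ | 1 < ∑ j, x j ∧
        (∑ j, x j)⁻¹ • x ∈ {s : Fin d → ℝ | ¬ ∑ j, s j = 1}} = ∅ := by
      ext x
      simp only [mem_setOf_eq, mem_empty_iff_false, iff_false, not_and, not_not]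
      intro h1
      have hpos : (0:ℝ) < ∑ j, x j := lt_trans one_pos h1
      have hsum : ∑ j, ((∑ j, x j)⁻¹ • x) j = (∑ j, x j)⁻¹ * ∑ j, x j := by
        simp [Finset.mul_sum]
      rw [hsum, inv_mul_cancel₀ hpos.ne']
    rw [hempty, measure_empty]
  -- main identity in ℝ≥0∞
  have key : ν {x | 1 < h x} = ∫⁻ s, (ENNReal.ofReal (h s)) ^ α ∂Γ := by
    rw [stepA]
    have hφhom : ∀ n (c : ℝ), 0 < c → ∀ x,
        SimpleFunc.eapprox F n (c • x) = SimpleFunc.eapprox F n x := by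
      intro n c hc x
      have hg : Measurable (fun y : Fin d → ℝ => c • y) := measurable_const_smul c
      have hcomp := SimpleFunc.eapprox_comp (f := F)
        (g := fun y : Fin d → ℝ => c • y) (n := n) mF hg
      have hFg : F ∘ (fun y : Fin d → ℝ => c • y) = F := funext fun y => hFhom c hc y
      rw [hFg] at hcomp
      exact (congrFun hcomp x).symm
    have hsetU : {x : Fin d → ℝ | 1 < ENNReal.ofReal (∑ j, x j) * F x}
        = ⋃ n, {x : Fin d → ℝ | 1 < ENNReal.ofReal (∑ j, x j) * SimpleFunc.eapprox F n x} := by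
      ext x
      simp only [mem_setOf_eq, mem_iUnion]
      rw [← SimpleFunc.iSup_eapprox_apply mF x, ENNReal.mul_iSup, lt_iSup_iff]
    have hmon : Monotone (fun n =>
        {x : Fin d → ℝ | 1 < ENNReal.ofReal (∑ j, x j) * SimpleFunc.eapprox F n x}) := by
      intro m n hmn x hx
      exact lt_of_lt_of_le hx
        (mul_le_mul_right (SimpleFunc.monotone_eapprox F hmn x) _)
    rw [hsetU, hmon.directed_le.measure_iUnion]
    have hrhs : ∀ n, ν {x : Fin d → ℝ | 1 < ENNReal.ofReal (∑ j, x j) * SimpleFunc.eapprox F n x}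
        = ∫⁻ s, (SimpleFunc.eapprox F n s) ^ α ∂Γ :=
      fun n => simple_case d α hα ν Γ hν_hom hΓ (SimpleFunc.eapprox F n)
        (hφhom n) (fun x => (SimpleFunc.eapprox_lt_top F n x).ne)
    calc ⨆ n, ν {x : Fin d → ℝ | 1 < ENNReal.ofReal (∑ j, x j) * SimpleFunc.eapprox F n x}
        = ⨆ n, ∫⁻ s, (SimpleFunc.eapprox F n s) ^ α ∂Γ := iSup_congr hrhs
      _ = ∫⁻ s, ⨆ n, (SimpleFunc.eapprox F n s) ^ α ∂Γ := by
          refine (lintegral_iSup (fun n => ?_) (fun m n hmn s => ?_)).symm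
          · exact (ENNReal.continuous_rpow_const.measurable).comp
              (SimpleFunc.measurable _)
          · exact ENNReal.rpow_le_rpow (SimpleFunc.monotone_eapprox F hmn s) hα.le
      _ = ∫⁻ s, (F s) ^ α ∂Γ := by
          refine lintegral_congr fun s => ?_
          rw [← SimpleFunc.iSup_eapprox_apply mF s]
          exact (Monotone.map_iSup_of_continuousAt (f := fun z : ENNReal => z ^ α)
            (ENNReal.continuous_rpow_const.continuousAt)
            (fun a b hab => ENNReal.rpow_le_rpow hab hα.le)
            (by simp [ENNReal.zero_rpow_of_pos hα])).symm
      _ = ∫⁻ s, (ENNReal.ofReal (h s)) ^ α ∂Γ := by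
          refine lintegral_congr_ae (hae.mono fun s hs => ?_)
          simp only [hF]
          rw [hs, inv_one, one_smul]
  -- conversion to a Bochner integral
  have hnn' : 0 ≤ᵐ[Γ] fun s => h s ^ α :=
    Filter.Eventually.of_forall fun s => Real.rpow_nonneg (hnn s) α
  have hm' : AEStronglyMeasurable (fun s => h s ^ α) Γ :=
    (by fun_prop : Measurable fun s => h s ^ α).aestronglyMeasurable
  rw [integral_eq_lintegral_of_nonneg_ae hnn' hm', key]
  congr 1
  exact lintegral_congr fun s => (ENNReal.ofReal_rpow_of_nonneg (hnn s) hα.le)
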